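/- (Lemma 4.) Suppose Assumption 2 (identifiability) holds with constant η > 0, and let T0 := 2K²ι/η². If the dataset D consists of n > T0 i.i.d. triples collected with the uniform policy, then with probability at least 1 − δ the empirical maximizer (π̂, ψ̂) satisfies V̂_D(π̂,ψ̂) − V̂_D(π_u,ψ̂) > V(π_u) + K·ε_D. -/

import Mathlib

open MeasureTheory ENNReal Finset

noncomputable section

namespace IGL

variable {X Y : Type*} [MeasurableSpace X] [MeasurableSpace Y] {K : ℕ}

/-- A (stochastic) policy: for each context `x`, `π x` is a probability vector over actions. -/
def IsPolicy (K : ℕ) (π : X → Fin K → ℝ) : Prop :=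
  (∀ a, Measurable fun x => π x a) ∧ (∀ x a, 0 ≤ π x a) ∧ ∀ x, ∑ a, π x a = 1

/-- A reward decoder: a measurable function `ψ : Y → [0,1]`. -/
def IsDecoder (ψ : Y → ℝ) : Prop :=
  Measurable ψ ∧ ∀ y, ψ y ∈ Set.Icc (0 : ℝ) 1

/-- The uniform policy `π_u(a|x) = 1/K`. -/
def uniformPolicy (X : Type*) (K : ℕ) : X → Fin K → ℝ := fun _ _ => (K : ℝ)⁻¹

/-- The value `V(π) = E_{x ~ d0}[∑_a π(a|x) R(x,a)]` of a policy. -/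
def polValue (d0 : Measure X) (R : X → Fin K → ℝ) (π : X → Fin K → ℝ) : ℝ :=
  ∫ x, ∑ a, π x a * R x a ∂d0

/-- `Δψ = ∫ ψ dν1 - ∫ ψ dν0`. -/
def deltaPsi (ν1 ν0 : Measure Y) (ψ : Y → ℝ) : ℝ :=
  (∫ y, ψ y ∂ν1) - ∫ y, ψ y ∂ν0

/-- The decoded value `V(π,ψ) = E[ψ(y)]` under the IGL generative process: `x ~ d0`,
`a ~ π(·|x)`, `r ~ Bernoulli(R(x,a))`, `y ~ ν1` if `r = 1`, `y ~ ν0` if `r = 0`. -/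
def decValue (d0 : Measure X) (R : X → Fin K → ℝ) (ν1 ν0 : Measure Y)
    (π : X → Fin K → ℝ) (ψ : Y → ℝ) : ℝ :=
  ∫ x, ∑ a, π x a * (R x a * (∫ y, ψ y ∂ν1) + (1 - R x a) * ∫ y, ψ y ∂ν0) ∂d0

/-- Law of the feedback `y` given that the latent Bernoulli reward has mean `p`. -/
def feedback (ν1 ν0 : Measure Y) (p : ℝ) : Measure Y :=
  ENNReal.ofReal p • ν1 + ENNReal.ofReal (1 - p) • ν0

/-- Law of one sample `(x, a, y)`: `x ~ d0`, `a ~ q(·|x)`, and `y` drawn from the IGL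
generative process (Assumption 1: `y ⟂ (x,a) | r`). -/
def sampleLaw (d0 : Measure X) (q : X → Fin K → ℝ) (R : X → Fin K → ℝ)
    (ν1 ν0 : Measure Y) : Measure (X × Fin K × Y) :=
  d0.bind fun x => Measure.sum fun a : Fin K =>
    ENNReal.ofReal (q x a) • (feedback ν1 ν0 (R x a)).map fun y => (x, a, y)

/-- Law of a dataset of `n` i.i.d. samples. -/
def dataLaw (n : ℕ) (μ : Measure (X × Fin K × Y)) : Measure (Fin n → X × Fin K × Y) :=
  Measure.pi fun _ => μ

/-- The empirical estimator for uniform-policy data: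
`V̂_D(π,ψ) = (1/n) ∑_i K·π(a_i|x_i)·ψ(y_i)`. -/
def VhatU (n : ℕ) (K : ℕ) (D : Fin n → X × Fin K × Y) (π : X → Fin K → ℝ) (ψ : Y → ℝ) : ℝ :=
  (n : ℝ)⁻¹ * ∑ i, (K : ℝ) * π (D i).1 (D i).2.1 * ψ (D i).2.2

/-- The empirical estimator of the value of the uniform policy:
`V̂_D(π_u,ψ) = (1/n) ∑_i ψ(y_i)`. -/
def VhatU0 (n : ℕ) {K : ℕ} (D : Fin n → X × Fin K × Y) (ψ : Y → ℝ) : ℝ :=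
  (n : ℝ)⁻¹ * ∑ i, ψ (D i).2.2

/-- `ι := log(2|Π||Ψ|/δ)`. -/
def iotaC (NPol NDec : ℕ) (δ : ℝ) : ℝ := Real.log (2 * NPol * NDec / δ)

/-- `ε_D := √(ι/(2n))`. -/
def epsD (NPol NDec : ℕ) (δ : ℝ) (n : ℕ) : ℝ := Real.sqrt (iotaC NPol NDec δ / (2 * n))


section Aux
open Real ProbabilityTheory

/-- Hoeffding's lemma for the Bernoulli mgf. -/
lemma aux_bern (p : ℝ) (hp0 : 0 ≤ p) (hp1 : p ≤ 1) (t : ℝ) :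
    1 - p + p * Real.exp t ≤ Real.exp (p * t + t ^ 2 / 8) := by
  have hD : ∀ s : ℝ, 0 < 1 - p + p * Real.exp s := by
    intro s
    rcases lt_or_ge p 1 with h | h
    · have : 0 ≤ p * Real.exp s := mul_nonneg hp0 (exp_pos s).le
      linarith
    · have hp : p = 1 := le_antisymm hp1 h
      subst hp; simpa using exp_pos s
  set g : ℝ → ℝ := fun s => p * s + s ^ 2 / 8 - Real.log (1 - p + p * Real.exp s) with hg
  set g' : ℝ → ℝ := fun s => p + s / 4 - p * Real.exp s / (1 - p + p * Real.exp s) with hg'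
  have hder : ∀ s, HasDerivAt g (g' s) s := by
    intro s
    have h1 : HasDerivAt (fun s : ℝ => 1 - p + p * Real.exp s) (p * Real.exp s) s :=
      ((Real.hasDerivAt_exp s).const_mul p).const_add (1 - p)
    have h2 : HasDerivAt (fun s : ℝ => Real.log (1 - p + p * Real.exp s))
        (p * Real.exp s / (1 - p + p * Real.exp s)) s := h1.log (hD s).ne'
    have h3 : HasDerivAt (fun s : ℝ => p * s + s ^ 2 / 8) (p + s / 4) s := by
      have := ((hasDerivAt_pow 2 s).div_const 8).const_add (p * s)
      have h4 : HasDerivAt (fun s : ℝ => p * s) p s := by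
        simpa using (hasDerivAt_id s).const_mul p
      have := h4.add ((hasDerivAt_pow 2 s).div_const 8)
      refine this.congr_deriv ?_; norm_num; ring
    exact h3.sub h2
  have hder' : ∀ s, HasDerivAt g'
      (1 / 4 - p * Real.exp s * (1 - p) / (1 - p + p * Real.exp s) ^ 2) s := by
    intro s
    have h1 : HasDerivAt (fun s : ℝ => 1 - p + p * Real.exp s) (p * Real.exp s) s :=
      ((Real.hasDerivAt_exp s).const_mul p).const_add (1 - p)
    have h2 : HasDerivAt (fun s : ℝ => p * Real.exp s) (p * Real.exp s) s :=
      (Real.hasDerivAt_exp s).const_mul p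
    have h3 := h2.div h1 (hD s).ne'
    have h4 : HasDerivAt (fun s : ℝ => p + s / 4) (1 / 4) s := by
      simpa using ((hasDerivAt_id s).div_const 4).const_add p
    have h5 := h4.sub h3
    refine h5.congr_deriv ?_
    have := (hD s).ne'
    field_simp
    ring
  have hg''nonneg : ∀ s, 0 ≤ 1 / 4 - p * Real.exp s * (1 - p) / (1 - p + p * Real.exp s) ^ 2 := by
    intro s
    rw [sub_nonneg, div_le_iff₀ (pow_pos (hD s) 2)]
    nlinarith [sq_nonneg (1 - p - p * Real.exp s), mul_nonneg hp0 (exp_pos s).le]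
  have hg'mono : Monotone g' := by
    have : ∀ s, 0 ≤ deriv g' s := fun s => by rw [(hder' s).deriv]; exact hg''nonneg s
    exact monotone_of_deriv_nonneg (fun s => (hder' s).differentiableAt) this
  have hg'0 : g' 0 = 0 := by simp [g']
  have hgcont : Continuous g := by
    have : Differentiable ℝ g := fun s => (hder s).differentiableAt
    exact this.continuous
  have hg0 : g 0 = 0 := by simp [g]
  have key : 0 ≤ g t := by
    rcases le_or_gt 0 t with ht | ht
    · have hmono : MonotoneOn g (Set.Ici 0) := by
        refine monotoneOn_of_deriv_nonneg (convex_Ici 0) (hgcont.continuousOn) ?_ ?_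
        · exact fun s _ => (hder s).differentiableAt.differentiableWithinAt
        · intro s hs
          rw [(hder s).deriv, ← hg'0]
          have hs0 : s ∈ Set.Ici (0:ℝ) := interior_subset hs
          exact hg'mono hs0
      have h6 := hmono (Set.self_mem_Ici) (Set.mem_Ici.mpr ht) ht
      rw [hg0] at h6; exact h6
    · have hanti : AntitoneOn g (Set.Iic 0) := by
        refine antitoneOn_of_deriv_nonpos (convex_Iic 0) (hgcont.continuousOn) ?_ ?_
        · exact fun s _ => (hder s).differentiableAt.differentiableWithinAt
        · intro s hs
          rw [(hder s).deriv, ← hg'0]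
          have hs0 : s ∈ Set.Iic (0:ℝ) := interior_subset hs
          exact hg'mono hs0
      have h6 := hanti (Set.mem_Iic.mpr ht.le) (Set.self_mem_Iic) ht.le
      rw [hg0] at h6; exact h6
  have hlog : Real.log (1 - p + p * Real.exp t) ≤ p * t + t ^ 2 / 8 := by
    simp only [g] at key; linarith
  calc 1 - p + p * Real.exp t = Real.exp (Real.log (1 - p + p * Real.exp t)) :=
        (Real.exp_log (hD t)).symm
    _ ≤ _ := Real.exp_le_exp.mpr hlog

lemma igl_integrable_of_forall_bound {Ω : Type*} [MeasurableSpace Ω] {μ : Measure Ω}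
    [IsFiniteMeasure μ] {f : Ω → ℝ} (hf : AEStronglyMeasurable f μ) (C : ℝ)
    (h : ∀ ω, |f ω| ≤ C) : Integrable f μ :=
  (integrable_const C).mono' hf (ae_of_all _ (by simpa [Real.norm_eq_abs] using h))

lemma aux_mgf {Ω : Type*} [MeasurableSpace Ω] (μ : Measure Ω) [IsProbabilityMeasure μ]
    (Z : Ω → ℝ) (hZ : Measurable Z) (a b : ℝ) (hab : a < b)
    (hmem : ∀ ω, Z ω ∈ Set.Icc a b) (s : ℝ) :
    ∫ ω, Real.exp (s * Z ω) ∂μ ≤ Real.exp (s * ∫ ω, Z ω ∂μ + s ^ 2 * (b - a) ^ 2 / 8) := by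
  have hba : (0:ℝ) < b - a := by linarith
  have habs : ∀ ω, |Z ω| ≤ max |a| |b| := fun ω =>
    abs_le.mpr ⟨le_trans (neg_le_neg (le_max_left |a| |b|)) (by
        have := (hmem ω).1; have := neg_abs_le a; linarith),
        le_trans (hmem ω).2 (le_trans (le_abs_self b) (le_max_right _ _))⟩
  have hZint : Integrable Z μ :=
    igl_integrable_of_forall_bound hZ.aestronglyMeasurable (max |a| |b|) habs
  have hEa : a ≤ ∫ ω, Z ω ∂μ := by
    have := integral_mono (integrable_const a) hZint (fun ω => (hmem ω).1)
    simpa using this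
  have hEb : ∫ ω, Z ω ∂μ ≤ b := by
    have := integral_mono hZint (integrable_const b) (fun ω => (hmem ω).2)
    simpa using this
  set m := ∫ ω, Z ω ∂μ with hm
  set p := (m - a) / (b - a) with hp
  have hp0 : 0 ≤ p := div_nonneg (by linarith) hba.le
  have hp1 : p ≤ 1 := (div_le_one hba).mpr (by linarith)
  -- pointwise bound
  have hpt : ∀ ω, Real.exp (s * Z ω) ≤
      Real.exp (s * a) * ((b - Z ω) / (b - a) + (Z ω - a) / (b - a) * Real.exp (s * (b - a))) := by
    intro ω
    set w := (Z ω - a) / (b - a) with hw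
    have hw0 : 0 ≤ w := div_nonneg (by linarith [(hmem ω).1]) hba.le
    have hw1 : w ≤ 1 := (div_le_one hba).mpr (by linarith [(hmem ω).2])
    have hZw : Z ω = a + w * (b - a) := by rw [hw, div_mul_cancel₀ _ hba.ne']; ring
    have hconv := convexOn_exp.2 (Set.mem_univ (s * a)) (Set.mem_univ (s * b))
      (by linarith : (0:ℝ) ≤ 1 - w) hw0 (by ring)
    simp only [smul_eq_mul] at hconv
    have h1 : s * Z ω = (1 - w) * (s * a) + w * (s * b) := by rw [hZw]; ring
    have h2 : (1 - w) = (b - Z ω) / (b - a) := by rw [hw, eq_div_iff hba.ne', sub_mul, div_mul_cancel₀ _ hba.ne']; ring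
    calc Real.exp (s * Z ω) ≤ (1 - w) * Real.exp (s * a) + w * Real.exp (s * b) := by
          rw [h1]; exact hconv
      _ = Real.exp (s * a) * ((b - Z ω) / (b - a) + (Z ω - a) / (b - a) * Real.exp (s * (b - a))) := by
          rw [← h2, ← hw, show s * b = s * a + s * (b - a) by ring, Real.exp_add]; ring
  -- integrate
  have hlhs_int : Integrable (fun ω => Real.exp (s * Z ω)) μ :=
    igl_integrable_of_forall_bound (((measurable_const.mul hZ).exp).aestronglyMeasurable)
      (Real.exp (|s| * max |a| |b|)) (fun ω => by
        rw [abs_of_nonneg (exp_pos _).le]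
        apply Real.exp_le_exp.mpr
        calc s * Z ω ≤ |s * Z ω| := le_abs_self _
          _ = |s| * |Z ω| := abs_mul _ _
          _ ≤ |s| * max |a| |b| := by
              exact mul_le_mul_of_nonneg_left (habs ω) (abs_nonneg s))
  have hrhs_eq : ∫ ω, (Real.exp (s * a) * ((b - Z ω) / (b - a)
        + (Z ω - a) / (b - a) * Real.exp (s * (b - a)))) ∂μ
      = Real.exp (s * a) * (1 - p + p * Real.exp (s * (b - a))) := by
    have hfun : ∀ ω, Real.exp (s * a) * ((b - Z ω) / (b - a)
        + (Z ω - a) / (b - a) * Real.exp (s * (b - a)))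
        = Real.exp (s * a) * ((b / (b - a)) - (a / (b - a)) * Real.exp (s * (b - a)))
          + (Real.exp (s * a) * ((Real.exp (s * (b - a)) - 1) / (b - a))) * Z ω := by
      intro ω; field_simp; ring
    simp_rw [hfun]
    rw [integral_add (integrable_const _) (hZint.const_mul _), integral_const,
      integral_const_mul]
    simp only [measure_univ, probReal_univ, ENNReal.toReal_one, one_smul, ← hm]
    field_simp [hp]
    rw [hp]
    field_simp
    ring
  have hint_rhs : Integrable (fun ω => Real.exp (s * a) * ((b - Z ω) / (b - a)
      + (Z ω - a) / (b - a) * Real.exp (s * (b - a)))) μ := by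
    have hfun : (fun ω => Real.exp (s * a) * ((b - Z ω) / (b - a)
        + (Z ω - a) / (b - a) * Real.exp (s * (b - a))))
        = (fun ω => Real.exp (s * a) * ((b / (b - a)) - (a / (b - a)) * Real.exp (s * (b - a)))
          + (Real.exp (s * a) * ((Real.exp (s * (b - a)) - 1) / (b - a))) * Z ω) := by
      funext ω; field_simp; ring
    rw [hfun]
    exact (integrable_const _).add (hZint.const_mul _)
  calc ∫ ω, Real.exp (s * Z ω) ∂μ
      ≤ ∫ ω, (Real.exp (s * a) * ((b - Z ω) / (b - a)
          + (Z ω - a) / (b - a) * Real.exp (s * (b - a)))) ∂μ :=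
        integral_mono hlhs_int hint_rhs hpt
    _ = Real.exp (s * a) * (1 - p + p * Real.exp (s * (b - a))) := hrhs_eq
    _ ≤ Real.exp (s * a) * Real.exp (p * (s * (b - a)) + (s * (b - a)) ^ 2 / 8) := by
        apply mul_le_mul_of_nonneg_left (aux_bern p hp0 hp1 _) (exp_pos _).le
    _ = Real.exp (s * m + s ^ 2 * (b - a) ^ 2 / 8) := by
        rw [← Real.exp_add]
        congr 1
        have hpm : p * (b - a) = m - a := by rw [hp, div_mul_cancel₀ _ hba.ne']
        linear_combination s * hpm

lemma aux_hoeffding {Ω : Type*} [MeasurableSpace Ω] (μ : Measure Ω) [IsProbabilityMeasure μ]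
    (Z : Ω → ℝ) (hZ : Measurable Z) (a b : ℝ) (hab : a < b)
    (hmem : ∀ ω, Z ω ∈ Set.Icc a b) (n : ℕ) (hn : 0 < n) (s : ℝ) (hs : 0 < s) :
    (Measure.pi fun _ : Fin n => μ) {D | ∑ i, Z (D i) ≤ n * (∫ ω, Z ω ∂μ) - s}
      ≤ ENNReal.ofReal (Real.exp (-2 * s ^ 2 / (n * (b - a) ^ 2))) := by
  letI : MeasureSpace Ω := ⟨μ⟩
  have hvol : (volume : Measure Ω) = μ := rfl
  have hba : (0:ℝ) < b - a := by linarith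
  have hnR : (0:ℝ) < n := Nat.cast_pos.mpr hn
  set c2 : ℝ := (b - a) ^ 2 with hc2
  have hc2pos : 0 < c2 := by positivity
  set t : ℝ := 4 * s / (n * c2) with ht
  have htpos : 0 < t := by positivity
  set m := ∫ ω, Z ω ∂μ with hm
  set W : (Fin n → Ω) → ℝ := fun D => ∑ i, Z (D i) with hW
  haveI : IsProbabilityMeasure (Measure.pi fun _ : Fin n => μ) := by infer_instance
  have hWmeas : Measurable W := Finset.measurable_sum _ (fun i _ => hZ.comp (measurable_pi_apply i))
  have habs : ∀ ω, |Z ω| ≤ max |a| |b| := fun ω =>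
    abs_le.mpr ⟨le_trans (neg_le_neg (le_max_left |a| |b|)) (by
        have := (hmem ω).1; have := neg_abs_le a; linarith),
        le_trans (hmem ω).2 (le_trans (le_abs_self b) (le_max_right _ _))⟩
  have h_int : Integrable (fun D => Real.exp (-t * W D)) (Measure.pi fun _ : Fin n => μ) := by
    apply igl_integrable_of_forall_bound ((measurable_const.mul hWmeas).exp).aestronglyMeasurable
      (Real.exp (t * (n * max |a| |b|)))
    intro D
    rw [abs_of_nonneg (exp_pos _).le]
    apply Real.exp_le_exp.mpr
    have hWabs : |W D| ≤ n * max |a| |b| := by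
      calc |W D| ≤ ∑ i, |Z (D i)| := Finset.abs_sum_le_sum_abs _ _
        _ ≤ ∑ _i : Fin n, max |a| |b| := Finset.sum_le_sum (fun i _ => habs (D i))
        _ = n * max |a| |b| := by simp [Finset.sum_const, mul_comm]
    calc -t * W D ≤ |(-t) * W D| := le_abs_self _
      _ = t * |W D| := by rw [abs_mul, abs_neg, abs_of_nonneg htpos.le]
      _ ≤ t * (n * max |a| |b|) := mul_le_mul_of_nonneg_left hWabs htpos.le
  have chernoff := measure_le_le_exp_mul_mgf (X := W) (μ := Measure.pi fun _ : Fin n => μ)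
    (t := -t) (n * m - s) (neg_nonpos.mpr htpos.le) h_int
  -- compute the mgf
  have hmgf : mgf W (Measure.pi fun _ : Fin n => μ) (-t)
      = (∫ ω, Real.exp (-t * Z ω) ∂μ) ^ n := by
    have h1 : ∀ D : Fin n → Ω, Real.exp (-t * W D) = ∏ i, Real.exp (-t * Z (D i)) := by
      intro D
      rw [← Real.exp_sum]
      congr 1
      rw [hW, Finset.mul_sum]
    rw [mgf]
    simp_rw [h1]
    have := MeasureTheory.integral_fintype_prod_eq_pow (ι := Fin n)
      (fun ω => Real.exp (-t * Z ω)) (E := Ω) (μ := μ)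
    simpa using this
  have hone : ∫ ω, Real.exp (-t * Z ω) ∂μ ≤ Real.exp (-t * m + t ^ 2 * c2 / 8) := by
    have := aux_mgf μ Z hZ a b hab hmem (-t)
    simpa [hm, hc2, neg_mul] using this
  have hpow : (∫ ω, Real.exp (-t * Z ω) ∂μ) ^ n ≤ Real.exp (n * (-t * m + t ^ 2 * c2 / 8)) := by
    calc (∫ ω, Real.exp (-t * Z ω) ∂μ) ^ n ≤ (Real.exp (-t * m + t ^ 2 * c2 / 8)) ^ n :=
        pow_le_pow_left₀ (integral_nonneg (fun ω => (exp_pos _).le)) hone n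
      _ = Real.exp (n * (-t * m + t ^ 2 * c2 / 8)) := by
        rw [← Real.exp_nat_mul]
  have hfinal : Real.exp (-(-t) * (n * m - s)) * Real.exp (n * (-t * m + t ^ 2 * c2 / 8))
      = Real.exp (-2 * s ^ 2 / (n * c2)) := by
    rw [← Real.exp_add]
    congr 1
    rw [ht]
    field_simp
    ring
  have hchain : ((Measure.pi fun _ : Fin n => μ) {D | W D ≤ n * m - s}).toReal
      ≤ Real.exp (-2 * s ^ 2 / (n * c2)) := by
    calc ((Measure.pi fun _ : Fin n => μ) {D | W D ≤ n * m - s}).toReal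
        ≤ Real.exp (-(-t) * (n * m - s)) * mgf W (Measure.pi fun _ : Fin n => μ) (-t) := chernoff
      _ ≤ Real.exp (-(-t) * (n * m - s)) * Real.exp (n * (-t * m + t ^ 2 * c2 / 8)) := by
          rw [hmgf]; exact mul_le_mul_of_nonneg_left hpow (exp_pos _).le
      _ = Real.exp (-2 * s ^ 2 / (n * c2)) := hfinal
  have hne : (Measure.pi fun _ : Fin n => μ) {D | W D ≤ n * m - s} ≠ ⊤ := measure_ne_top _ _
  calc (Measure.pi fun _ : Fin n => μ) {D | ∑ i, Z (D i) ≤ n * m - s}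
      = ENNReal.ofReal (((Measure.pi fun _ : Fin n => μ) {D | W D ≤ n * m - s}).toReal) := by
        rw [ENNReal.ofReal_toReal hne]
    _ ≤ ENNReal.ofReal (Real.exp (-2 * s ^ 2 / (n * c2))) := ENNReal.ofReal_le_ofReal hchain

end Aux

lemma measurable_kernel (q R : X → Fin K → ℝ) (hq : ∀ a, Measurable fun x => q x a)
    (hR : ∀ a, Measurable fun x => R x a)
    (ν1 ν0 : Measure Y) [IsProbabilityMeasure ν1] [IsProbabilityMeasure ν0] :
    Measurable (fun x => Measure.sum fun a : Fin K =>
      ENNReal.ofReal (q x a) • (feedback ν1 ν0 (R x a)).map fun y => (x, a, y)) := by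
  apply Measure.measurable_of_measurable_coe
  intro s hs
  have hemb : ∀ (x : X) (a : Fin K), Measurable (fun y : Y => ((x, a, y) : X × Fin K × Y)) :=
    fun x a => measurable_const.prodMk (measurable_const.prodMk measurable_id)
  have hsa : ∀ a : Fin K, MeasurableSet ((fun xy : X × Y => (xy.1, a, xy.2)) ⁻¹' s) := fun a =>
    (measurable_fst.prodMk (measurable_const.prodMk measurable_snd)) hs
  have happ : ∀ x, (Measure.sum fun a : Fin K =>
      ENNReal.ofReal (q x a) • (feedback ν1 ν0 (R x a)).map fun y => (x, a, y)) s
      = ∑ a : Fin K, ENNReal.ofReal (q x a) *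
          (ENNReal.ofReal (R x a) * ν1 (Prod.mk x ⁻¹' ((fun xy : X × Y => (xy.1, a, xy.2)) ⁻¹' s))
          + ENNReal.ofReal (1 - R x a) *
              ν0 (Prod.mk x ⁻¹' ((fun xy : X × Y => (xy.1, a, xy.2)) ⁻¹' s))) := by
    intro x
    rw [Measure.sum_apply _ hs, tsum_fintype]
    refine Finset.sum_congr rfl (fun a _ => ?_)
    rw [Measure.smul_apply, smul_eq_mul, Measure.map_apply (hemb x a) hs]
    have hpre : (fun y : Y => ((x, a, y) : X × Fin K × Y)) ⁻¹' s
        = Prod.mk x ⁻¹' ((fun xy : X × Y => (xy.1, a, xy.2)) ⁻¹' s) := rfl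
    rw [hpre, feedback, Measure.add_apply, Measure.smul_apply, Measure.smul_apply,
      smul_eq_mul, smul_eq_mul]
  simp_rw [happ]
  apply Finset.measurable_sum
  intro a _
  exact (ENNReal.measurable_ofReal.comp (hq a)).mul
    (((ENNReal.measurable_ofReal.comp (hR a)).mul
        (measurable_measure_prodMk_left (hsa a))).add
      ((ENNReal.measurable_ofReal.comp ((hR a).const_sub 1)).mul
        (measurable_measure_prodMk_left (hsa a))))

lemma feedback_univ (ν1 ν0 : Measure Y) [IsProbabilityMeasure ν1] [IsProbabilityMeasure ν0]
    (p : ℝ) (hp0 : 0 ≤ p) (hp1 : p ≤ 1) : feedback ν1 ν0 p Set.univ = 1 := by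
  rw [feedback, Measure.add_apply, Measure.smul_apply, Measure.smul_apply, smul_eq_mul,
    smul_eq_mul, measure_univ, measure_univ, mul_one, mul_one,
    ← ENNReal.ofReal_add hp0 (by linarith)]
  norm_num

lemma sampleLaw_isProbability (hK : 0 < K) (d0 : Measure X) [IsProbabilityMeasure d0]
    (ν1 ν0 : Measure Y) [IsProbabilityMeasure ν1] [IsProbabilityMeasure ν0]
    (q R : X → Fin K → ℝ) (hq : ∀ a, Measurable fun x => q x a)
    (hq0 : ∀ x a, 0 ≤ q x a) (hq1 : ∀ x, ∑ a, q x a = 1)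
    (hR : ∀ a, Measurable fun x => R x a) (hRmem : ∀ x a, R x a ∈ Set.Icc (0:ℝ) 1) :
    IsProbabilityMeasure (sampleLaw d0 q R ν1 ν0) := by
  constructor
  rw [sampleLaw, Measure.bind_apply MeasurableSet.univ (measurable_kernel q R hq hR ν1 ν0).aemeasurable]
  have : ∀ x, (Measure.sum fun a : Fin K =>
      ENNReal.ofReal (q x a) • (feedback ν1 ν0 (R x a)).map fun y => (x, a, y)) Set.univ
      = 1 := by
    intro x
    rw [Measure.sum_apply _ MeasurableSet.univ, tsum_fintype]
    have : ∀ a : Fin K, (ENNReal.ofReal (q x a) •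
        (feedback ν1 ν0 (R x a)).map fun y => (x, a, y)) Set.univ
        = ENNReal.ofReal (q x a) := by
      intro a
      rw [Measure.smul_apply, smul_eq_mul,
        Measure.map_apply (f := fun y : Y => ((x, a, y) : X × Fin K × Y))
          (measurable_prodMk_left.comp measurable_prodMk_left) MeasurableSet.univ]
      simp only [Set.preimage_univ]
      rw [feedback_univ ν1 ν0 _ (hRmem x a).1 (hRmem x a).2, mul_one]
    rw [Finset.sum_congr rfl (fun a _ => this a), ← ENNReal.ofReal_sum_of_nonneg
      (fun a _ => hq0 x a), hq1 x, ENNReal.ofReal_one]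
  simp_rw [this]
  simp

lemma integral_sampleLaw (hK : 0 < K) (d0 : Measure X) [IsProbabilityMeasure d0]
    (ν1 ν0 : Measure Y) [IsProbabilityMeasure ν1] [IsProbabilityMeasure ν0]
    (q R : X → Fin K → ℝ) (hq : ∀ a, Measurable fun x => q x a)
    (hq0 : ∀ x a, 0 ≤ q x a)
    (hR : ∀ a, Measurable fun x => R x a) (hRmem : ∀ x a, R x a ∈ Set.Icc (0:ℝ) 1)
    (g : X × Fin K × Y → ℝ) (hg : Measurable g) (C : ℝ)
    (hgmem : ∀ p, g p ∈ Set.Icc (0:ℝ) C) :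
    ∫ p, g p ∂(sampleLaw d0 q R ν1 ν0)
      = ∫ x, ∑ a, q x a * (R x a * (∫ y, g (x, a, y) ∂ν1)
          + (1 - R x a) * ∫ y, g (x, a, y) ∂ν0) ∂d0 := by
  haveI hXne : Nonempty X := by
    by_contra h; rw [not_nonempty_iff] at h
    have h1 := measure_univ (μ := d0)
    rw [Set.univ_eq_empty_iff.mpr h, measure_empty] at h1
    exact zero_ne_one h1
  haveI hYne : Nonempty Y := by
    by_contra h; rw [not_nonempty_iff] at h
    have h1 := measure_univ (μ := ν1)
    rw [Set.univ_eq_empty_iff.mpr h, measure_empty] at h1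
    exact zero_ne_one h1
  have hgC : 0 ≤ C := by
    have := hgmem (Classical.arbitrary X, ⟨0, hK⟩, Classical.arbitrary Y)
    exact le_trans this.1 this.2
  have hκ := measurable_kernel q R hq hR ν1 ν0
  have hgm : Measurable fun p : X × Fin K × Y => ENNReal.ofReal (g p) :=
    ENNReal.measurable_ofReal.comp hg
  have hslice1 : ∀ (a : Fin K), Measurable (fun xy : X × Y => g (xy.1, a, xy.2)) := fun a =>
    hg.comp (measurable_fst.prodMk (measurable_const.prodMk measurable_snd))
  have hint1 : ∀ (x : X) (a : Fin K), Integrable (fun y => g (x, a, y)) ν1 := fun x a =>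
    igl_integrable_of_forall_bound
      ((hg.comp (measurable_prodMk_left.comp measurable_prodMk_left)).aestronglyMeasurable)
      C (fun y => abs_le.mpr ⟨by linarith [(hgmem (x, a, y)).1], (hgmem _).2⟩)
  have hint0 : ∀ (x : X) (a : Fin K), Integrable (fun y => g (x, a, y)) ν0 := fun x a =>
    igl_integrable_of_forall_bound
      ((hg.comp (measurable_prodMk_left.comp measurable_prodMk_left)).aestronglyMeasurable)
      C (fun y => abs_le.mpr ⟨by linarith [(hgmem (x, a, y)).1], (hgmem _).2⟩)
  set I1 : X → Fin K → ℝ := fun x a => ∫ y, g (x, a, y) ∂ν1 with hI1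
  set I0 : X → Fin K → ℝ := fun x a => ∫ y, g (x, a, y) ∂ν0 with hI0
  have hI1nn : ∀ x a, 0 ≤ I1 x a := fun x a => integral_nonneg fun y => (hgmem _).1
  have hI0nn : ∀ x a, 0 ≤ I0 x a := fun x a => integral_nonneg fun y => (hgmem _).1
  have hI1m : ∀ a, Measurable fun x => I1 x a := fun a =>
    ((hslice1 a).stronglyMeasurable.integral_prod_right' (ν := ν1)).measurable
  have hI0m : ∀ a, Measurable fun x => I0 x a := fun a =>
    ((hslice1 a).stronglyMeasurable.integral_prod_right' (ν := ν0)).measurable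
  set F : X → ℝ := fun x => ∑ a, q x a * (R x a * I1 x a + (1 - R x a) * I0 x a) with hF
  have hFnn : ∀ x, 0 ≤ F x := fun x => Finset.sum_nonneg fun a _ =>
    mul_nonneg (hq0 x a) (add_nonneg (mul_nonneg (hRmem x a).1 (hI1nn x a))
      (mul_nonneg (by linarith [(hRmem x a).2]) (hI0nn x a)))
  have hFm : Measurable F := Finset.measurable_sum _ fun a _ =>
    (hq a).mul (((hR a).mul (hI1m a)).add ((measurable_const.sub (hR a)).mul (hI0m a)))
  have hL : ∫ p, g p ∂(sampleLaw d0 q R ν1 ν0)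
      = (∫⁻ p, ENNReal.ofReal (g p) ∂(sampleLaw d0 q R ν1 ν0)).toReal :=
    integral_eq_lintegral_of_nonneg_ae (ae_of_all _ fun p => (hgmem p).1)
      hg.aestronglyMeasurable
  have hbind : ∫⁻ p, ENNReal.ofReal (g p) ∂(sampleLaw d0 q R ν1 ν0)
      = ∫⁻ x, ∫⁻ p, ENNReal.ofReal (g p)
          ∂(Measure.sum fun a : Fin K =>
            ENNReal.ofReal (q x a) • (feedback ν1 ν0 (R x a)).map fun y => (x, a, y)) ∂d0 := by
    rw [sampleLaw]; exact Measure.lintegral_bind hκ.aemeasurable hgm.aemeasurable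
  have hinner : ∀ x, ∫⁻ p, ENNReal.ofReal (g p)
      ∂(Measure.sum fun a : Fin K =>
        ENNReal.ofReal (q x a) • (feedback ν1 ν0 (R x a)).map fun y => (x, a, y))
      = ENNReal.ofReal (F x) := by
    intro x
    rw [lintegral_sum_measure, tsum_fintype]
    have hterm : ∀ a : Fin K, ∫⁻ p, ENNReal.ofReal (g p)
        ∂(ENNReal.ofReal (q x a) • (feedback ν1 ν0 (R x a)).map fun y => (x, a, y))
        = ENNReal.ofReal (q x a * (R x a * I1 x a + (1 - R x a) * I0 x a)) := by
      intro a
      have hemb : Measurable fun y : Y => ((x, a, y) : X × Fin K × Y) :=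
        measurable_prodMk_left.comp measurable_prodMk_left
      rw [lintegral_smul_measure, lintegral_map hgm hemb,
        feedback, lintegral_add_measure, lintegral_smul_measure, lintegral_smul_measure,
        ← ofReal_integral_eq_lintegral_ofReal (hint1 x a) (ae_of_all _ fun y => (hgmem _).1),
        ← ofReal_integral_eq_lintegral_ofReal (hint0 x a) (ae_of_all _ fun y => (hgmem _).1),
        smul_eq_mul, smul_eq_mul, smul_eq_mul,
        ← ENNReal.ofReal_mul (hRmem x a).1,
        ← ENNReal.ofReal_mul (by linarith [(hRmem x a).2] : (0:ℝ) ≤ 1 - R x a),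
        ← ENNReal.ofReal_add (mul_nonneg (hRmem x a).1 (hI1nn x a))
          (mul_nonneg (by linarith [(hRmem x a).2]) (hI0nn x a)),
        ← ENNReal.ofReal_mul (hq0 x a)]
    rw [Finset.sum_congr rfl fun a _ => hterm a,
      ← ENNReal.ofReal_sum_of_nonneg (fun a _ => mul_nonneg (hq0 x a)
        (add_nonneg (mul_nonneg (hRmem x a).1 (hI1nn x a))
          (mul_nonneg (by linarith [(hRmem x a).2]) (hI0nn x a))))]
  have hR2 : ∫ x, F x ∂d0 = (∫⁻ x, ENNReal.ofReal (F x) ∂d0).toReal :=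
    integral_eq_lintegral_of_nonneg_ae (ae_of_all _ hFnn) hFm.aestronglyMeasurable
  rw [hL, hbind]
  simp_rw [hinner]
  exact hR2.symm

lemma measurable_policy_eval {π : X → Fin K → ℝ} (hπ : ∀ a, Measurable fun x => π x a) :
    Measurable fun p : X × Fin K × Y => π p.1 p.2.1 := by
  have heq : (fun p : X × Fin K × Y => π p.1 p.2.1)
      = fun p => ∑ a : Fin K, if p.2.1 = a then π p.1 a else 0 := by
    funext p
    rw [Finset.sum_ite_eq (Finset.univ : Finset (Fin K)) p.2.1 (fun a => π p.1 a)]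
    simp
  rw [heq]
  apply Finset.measurable_sum
  intro a _
  exact Measurable.ite ((measurable_fst.comp measurable_snd) (measurableSet_singleton a))
    ((hπ a).comp measurable_fst) measurable_const

set_option maxHeartbeats 2000000 in
/-- **Lemma 4.** Suppose Assumption 2 (identifiability) holds with constant
`η > 0`, and let `T₀ := 2K²ι/η²`. If the dataset `D` consists of `n > T₀` i.i.d. triples
collected with the uniform policy, then with probability at least `1 − δ` the empirical
maximizer `(π̂, ψ̂)` satisfies `V̂_D(π̂,ψ̂) − V̂_D(π_u,ψ̂) > V(π_u) + K·ε_D`. -/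
theorem igl_lemma4_warm_start
    (hK : 0 < K)
    (d0 : Measure X) [IsProbabilityMeasure d0]
    (ν1 ν0 : Measure Y) [IsProbabilityMeasure ν1] [IsProbabilityMeasure ν0]
    (R : X → Fin K → ℝ) (hRmeas : ∀ a, Measurable fun x => R x a)
    (hR : ∀ x a, R x a ∈ Set.Icc (0 : ℝ) 1)
    {ιPol ιDec : Type*} [Fintype ιPol] [Fintype ιDec] [Nonempty ιPol] [Nonempty ιDec]
    (P : ιPol → X → Fin K → ℝ) (hP : ∀ i, IsPolicy K (P i))
    (Ψc : ιDec → Y → ℝ) (hΨ : ∀ j, IsDecoder (Ψc j))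
    -- `π⋆` and `ψ⋆`
    (istar : ιPol) (histar : ∀ i, polValue d0 R (P i) ≤ polValue d0 R (P istar))
    (jstar : ιDec) (hjstar : ∀ j, deltaPsi ν1 ν0 (Ψc j) ≤ deltaPsi ν1 ν0 (Ψc jstar))
    -- Assumption 2 (identifiability)
    (η : ℝ) (hη : 0 < η)
    (hident : polValue d0 R (uniformPolicy X K) + η ≤
      (polValue d0 R (P istar) - polValue d0 R (uniformPolicy X K))
        * deltaPsi ν1 ν0 (Ψc jstar))
    (n : ℕ) (δ : ℝ) (hδ : 0 < δ) (hδ1 : δ < 1)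
    -- `n > T₀ = 2K²ι/η²`
    (hwarm : (n : ℝ) > 2 * K ^ 2 * iotaC (Fintype.card ιPol) (Fintype.card ιDec) δ / η ^ 2) :
    ENNReal.ofReal (1 - δ) ≤
      dataLaw n (sampleLaw d0 (uniformPolicy X K) R ν1 ν0)
        {D | ∀ (ihat : ιPol) (jhat : ιDec),
          (∀ (i : ιPol) (j : ιDec),
            VhatU n K D (P i) (Ψc j) - VhatU0 n D (Ψc j)
              ≤ VhatU n K D (P ihat) (Ψc jhat) - VhatU0 n D (Ψc jhat)) →
          VhatU n K D (P ihat) (Ψc jhat) - VhatU0 n D (Ψc jhat)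
            > polValue d0 R (uniformPolicy X K)
              + K * epsD (Fintype.card ιPol) (Fintype.card ιDec) δ n} := by
  classical
  obtain ⟨hPmeas, hPnn, hPsum⟩ := hP istar
  obtain ⟨hψmeas, hψmem⟩ := hΨ jstar
  have hK1 : (1:ℝ) ≤ (K:ℝ) := by exact_mod_cast hK
  have hKR : (0:ℝ) < (K:ℝ) := by linarith
  have hKne : (K:ℝ) ≠ 0 := hKR.ne'
  have hPle1 : ∀ x a, P istar x a ≤ 1 := by
    intro x a
    have h1 := Finset.single_le_sum (f := fun a => P istar x a)
      (fun i _ => hPnn x i) (Finset.mem_univ a)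
    rw [hPsum x] at h1
    exact h1
  -- numeric setup
  set NP := Fintype.card ιPol with hNPdef
  set ND := Fintype.card ιDec with hNDdef
  have hNP : 1 ≤ NP := Fintype.card_pos
  have hND : 1 ≤ ND := Fintype.card_pos
  have hNPR : (1:ℝ) ≤ (NP:ℝ) := by exact_mod_cast hNP
  have hNDR : (1:ℝ) ≤ (ND:ℝ) := by exact_mod_cast hND
  set ι := iotaC NP ND δ with hiota
  have hargpos : (0:ℝ) < 2 * NP * ND / δ := by positivity
  have hιpos : 0 < ι := by
    rw [hiota, iotaC]
    apply Real.log_pos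
    rw [lt_div_iff₀ hδ]
    nlinarith
  have hnpos : 0 < n := by
    rcases Nat.eq_zero_or_pos n with h | h
    · exfalso
      rw [h] at hwarm
      have h2 : (0:ℝ) < 2 * (K:ℝ) ^ 2 * ι / η ^ 2 :=
        div_pos (by positivity) (pow_pos hη 2)
      simp only [Nat.cast_zero] at hwarm
      linarith
    · exact h
  have hnR : (0:ℝ) < (n:ℝ) := by exact_mod_cast hnpos
  set ε := epsD NP ND δ n with hep
  have hε2 : ε ^ 2 = ι / (2 * n) := by
    rw [hep, epsD, sq]
    exact Real.mul_self_sqrt (by positivity)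
  have hεpos : 0 < ε := by
    rw [hep, epsD]
    exact Real.sqrt_pos.mpr (by positivity)
  have hKε : (K:ℝ) * ε < η / 2 := by
    have h2 : 2 * (K:ℝ) ^ 2 * ι < n * η ^ 2 := by
      rw [gt_iff_lt, div_lt_iff₀ (pow_pos hη 2)] at hwarm
      linarith
    have h1 : (K:ℝ) ^ 2 * ε ^ 2 < (η / 2) ^ 2 := by
      rw [hε2, mul_div_assoc']
      rw [div_lt_iff₀ (by positivity)]
      nlinarith
    nlinarith [mul_pos hKR hεpos]
  -- the random variable Z
  set Z : X × Fin K × Y → ℝ :=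
    fun p => (K:ℝ) * P istar p.1 p.2.1 * Ψc jstar p.2.2 - Ψc jstar p.2.2 with hZdef
  have hψm2 : Measurable fun p : X × Fin K × Y => Ψc jstar p.2.2 :=
    hψmeas.comp (measurable_snd.comp measurable_snd)
  have hZmeas : Measurable Z :=
    ((measurable_const.mul (measurable_policy_eval hPmeas)).mul hψm2).sub hψm2
  have hZmem : ∀ p, Z p ∈ Set.Icc (-1 : ℝ) ((K:ℝ) - 1) := by
    intro p
    have h1 := hPnn p.1 p.2.1
    have h2 := hPle1 p.1 p.2.1
    have h3 := (hψmem p.2.2).1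
    have h4 := (hψmem p.2.2).2
    constructor
    · simp only [hZdef]
      nlinarith [mul_nonneg (mul_nonneg hKR.le h1) h3]
    · simp only [hZdef]
      nlinarith [mul_nonneg (by linarith : (0:ℝ) ≤ (K:ℝ) - 1) (by linarith : (0:ℝ) ≤ 1 - Ψc jstar p.2.2),
        mul_nonneg (mul_nonneg hKR.le h3) (by linarith : (0:ℝ) ≤ 1 - P istar p.1 p.2.1)]
  -- the sample law is a probability measure
  set μs := sampleLaw d0 (uniformPolicy X K) R ν1 ν0 with hμs
  have huq : ∀ a : Fin K, Measurable fun x : X => uniformPolicy X K x a :=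
    fun a => measurable_const
  have huq0 : ∀ (x : X) (a : Fin K), 0 ≤ uniformPolicy X K x a := by
    intro x a; rw [uniformPolicy]; positivity
  have huq1 : ∀ x : X, ∑ a, uniformPolicy X K x a = 1 := by
    intro x
    simp only [uniformPolicy, Finset.sum_const, Finset.card_univ, Fintype.card_fin,
      nsmul_eq_mul]
    field_simp
  haveI hprob : IsProbabilityMeasure μs :=
    sampleLaw_isProbability hK d0 ν1 ν0 _ R huq huq0 huq1 hRmeas hR
  -- the mean of Z
  set m1 := ∫ y, Ψc jstar y ∂ν1 with hm1
  set m0 := ∫ y, Ψc jstar y ∂ν0 with hm0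
  have hm1nn : 0 ≤ m1 := integral_nonneg fun y => (hψmem y).1
  have hm0nn : 0 ≤ m0 := integral_nonneg fun y => (hψmem y).1
  set g1 : X × Fin K × Y → ℝ := fun p => (K:ℝ) * P istar p.1 p.2.1 * Ψc jstar p.2.2
    with hg1def
  set g2 : X × Fin K × Y → ℝ := fun p => Ψc jstar p.2.2 with hg2def
  have hg1meas : Measurable g1 := (measurable_const.mul (measurable_policy_eval hPmeas)).mul hψm2
  have hg2meas : Measurable g2 := hψm2
  have hg1mem : ∀ p, g1 p ∈ Set.Icc (0:ℝ) (K:ℝ) := by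
    intro p
    have h1 := hPnn p.1 p.2.1
    have h2 := hPle1 p.1 p.2.1
    have h3 := (hψmem p.2.2).1
    have h4 := (hψmem p.2.2).2
    constructor
    · simp only [hg1def]; positivity
    · simp only [hg1def]
      nlinarith [mul_le_one₀ h2 h3 h4, mul_nonneg h1 h3]
  have hg2mem : ∀ p, g2 p ∈ Set.Icc (0:ℝ) 1 := fun p => hψmem p.2.2
  -- affine integral helper
  have haff : ∀ (c d : ℝ) (G : X → ℝ), Integrable G d0 →
      ∫ x, (c + d * G x) ∂d0 = c + d * ∫ x, G x ∂d0 := by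
    intro c d G hGint
    rw [integral_add (integrable_const c) (hGint.const_mul d), integral_const,
      integral_const_mul]
    simp
  -- compute ∫ g1
  have hG1meas : Measurable fun x => ∑ a, P istar x a * R x a :=
    Finset.measurable_sum _ fun a _ => (hPmeas a).mul (hRmeas a)
  have hG1bd : ∀ x, |∑ a, P istar x a * R x a| ≤ 1 := by
    intro x
    rw [abs_of_nonneg (Finset.sum_nonneg fun a _ => mul_nonneg (hPnn x a) (hR x a).1)]
    calc ∑ a, P istar x a * R x a ≤ ∑ a, P istar x a :=
        Finset.sum_le_sum fun a _ => by nlinarith [hPnn x a, (hR x a).1, (hR x a).2]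
      _ = 1 := hPsum x
  have hG1int : Integrable (fun x => ∑ a, P istar x a * R x a) d0 :=
    igl_integrable_of_forall_bound hG1meas.aestronglyMeasurable 1 hG1bd
  have hEg1 : ∫ p, g1 p ∂μs = m0 + (m1 - m0) * polValue d0 R (P istar) := by
    rw [hμs, integral_sampleLaw hK d0 ν1 ν0 _ R huq huq0 hRmeas hR g1 hg1meas (K:ℝ) hg1mem]
    have hfun : (fun x => ∑ a, uniformPolicy X K x a * (R x a * (∫ y, g1 (x, a, y) ∂ν1)
        + (1 - R x a) * ∫ y, g1 (x, a, y) ∂ν0))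
        = fun x => m0 + (m1 - m0) * ∑ a, P istar x a * R x a := by
      funext x
      have hterm : ∀ a : Fin K, uniformPolicy X K x a * (R x a * (∫ y, g1 (x, a, y) ∂ν1)
          + (1 - R x a) * ∫ y, g1 (x, a, y) ∂ν0)
          = (m1 - m0) * (P istar x a * R x a) + m0 * P istar x a := by
        intro a
        have e1 : (∫ y, g1 (x, a, y) ∂ν1) = (K:ℝ) * P istar x a * m1 := by
          simp only [hg1def, hm1]
          exact integral_const_mul _ _
        have e0 : (∫ y, g1 (x, a, y) ∂ν0) = (K:ℝ) * P istar x a * m0 := by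
          simp only [hg1def, hm0]
          exact integral_const_mul _ _
        rw [e1, e0, uniformPolicy]
        field_simp
        ring
      rw [Finset.sum_congr rfl fun a _ => hterm a, Finset.sum_add_distrib,
        ← Finset.mul_sum, ← Finset.mul_sum, hPsum x]
      ring
    rw [hfun, haff _ _ _ hG1int, polValue]
  -- compute ∫ g2
  have hG2meas : Measurable fun x => ∑ a : Fin K, (K:ℝ)⁻¹ * R x a :=
    Finset.measurable_sum _ fun a _ => measurable_const.mul (hRmeas a)
  have hG2bd : ∀ x, |∑ a : Fin K, (K:ℝ)⁻¹ * R x a| ≤ 1 := by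
    intro x
    rw [abs_of_nonneg (Finset.sum_nonneg fun a _ =>
      mul_nonneg (by positivity) (hR x a).1)]
    calc ∑ a : Fin K, (K:ℝ)⁻¹ * R x a ≤ ∑ _a : Fin K, (K:ℝ)⁻¹ :=
        Finset.sum_le_sum fun a _ => by
          have := (hR x a).2
          have h0 : (0:ℝ) ≤ (K:ℝ)⁻¹ := by positivity
          nlinarith [(hR x a).1]
      _ = 1 := by
        simp only [Finset.sum_const, Finset.card_univ, Fintype.card_fin, nsmul_eq_mul]
        field_simp
  have hG2int : Integrable (fun x => ∑ a : Fin K, (K:ℝ)⁻¹ * R x a) d0 :=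
    igl_integrable_of_forall_bound hG2meas.aestronglyMeasurable 1 hG2bd
  have hEg2 : ∫ p, g2 p ∂μs = m0 + (m1 - m0) * polValue d0 R (uniformPolicy X K) := by
    rw [hμs, integral_sampleLaw hK d0 ν1 ν0 _ R huq huq0 hRmeas hR g2 hg2meas 1 hg2mem]
    have hfun : (fun x => ∑ a, uniformPolicy X K x a * (R x a * (∫ y, g2 (x, a, y) ∂ν1)
        + (1 - R x a) * ∫ y, g2 (x, a, y) ∂ν0))
        = fun x => m0 + (m1 - m0) * ∑ a : Fin K, (K:ℝ)⁻¹ * R x a := by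
      funext x
      have hterm : ∀ a : Fin K, uniformPolicy X K x a * (R x a * (∫ y, g2 (x, a, y) ∂ν1)
          + (1 - R x a) * ∫ y, g2 (x, a, y) ∂ν0)
          = (m1 - m0) * ((K:ℝ)⁻¹ * R x a) + m0 * (K:ℝ)⁻¹ := by
        intro a
        have e1 : (∫ y, g2 (x, a, y) ∂ν1) = m1 := rfl
        have e0 : (∫ y, g2 (x, a, y) ∂ν0) = m0 := rfl
        rw [e1, e0, uniformPolicy]
        ring
      rw [Finset.sum_congr rfl fun a _ => hterm a, Finset.sum_add_distrib,
        ← Finset.mul_sum]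
      simp only [Finset.sum_const, Finset.card_univ, Fintype.card_fin, nsmul_eq_mul]
      field_simp
      ring
    rw [hfun, haff _ _ _ hG2int, polValue]
    have : (fun x => ∑ a, uniformPolicy X K x a * R x a)
        = fun x => ∑ a : Fin K, (K:ℝ)⁻¹ * R x a := by
      funext x; exact Finset.sum_congr rfl fun a _ => by rw [uniformPolicy]
    rw [this]
  -- integrability of g1, g2 under μs, and the mean of Z
  have hg1int : Integrable g1 μs :=
    igl_integrable_of_forall_bound hg1meas.aestronglyMeasurable (K:ℝ) fun p =>
      abs_le.mpr ⟨by linarith [(hg1mem p).1], (hg1mem p).2⟩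
  have hg2int : Integrable g2 μs :=
    igl_integrable_of_forall_bound hg2meas.aestronglyMeasurable 1 fun p =>
      abs_le.mpr ⟨by linarith [(hg2mem p).1], (hg2mem p).2⟩
  have hEZ : ∫ p, Z p ∂μs
      = (m1 - m0) * (polValue d0 R (P istar) - polValue d0 R (uniformPolicy X K)) := by
    have h1 : ∫ p, Z p ∂μs = (∫ p, g1 p ∂μs) - ∫ p, g2 p ∂μs := integral_sub hg1int hg2int
    rw [h1, hEg1, hEg2]
    ring
  have hEZge : polValue d0 R (uniformPolicy X K) + η ≤ ∫ p, Z p ∂μs := by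
    rw [hEZ, mul_comm]
    have hd : deltaPsi ν1 ν0 (Ψc jstar) = m1 - m0 := rfl
    rw [hd] at hident
    exact hident
  -- Hoeffding
  set s := (n:ℝ) * ((K:ℝ) * ε) with hs
  have hspos : 0 < s := by positivity
  have hab : (-1 : ℝ) < (K:ℝ) - 1 := by linarith
  have hhoef := aux_hoeffding μs Z hZmeas (-1) ((K:ℝ) - 1) hab hZmem n hnpos s hspos
  have hexp : -2 * s ^ 2 / (n * ((K:ℝ) - 1 - -1) ^ 2) = -ι := by
    have hc : ((K:ℝ) - 1 - -1) = (K:ℝ) := by ring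
    rw [hc, hs]
    rw [div_eq_iff (by positivity : (n:ℝ) * (K:ℝ) ^ 2 ≠ 0)]
    have : ((n:ℝ) * ((K:ℝ) * ε)) ^ 2 = (n:ℝ)^2 * (K:ℝ)^2 * ε^2 := by ring
    rw [this, hε2]
    field_simp
  rw [hexp] at hhoef
  have hexpδ : Real.exp (-ι) ≤ δ := by
    rw [hiota, iotaC, Real.exp_neg, Real.exp_log hargpos, inv_div]
    exact div_le_self hδ.le (by nlinarith)
  have hbad : (Measure.pi fun _ : Fin n => μs) {D | ∑ i, Z (D i) ≤ n * (∫ p, Z p ∂μs) - s}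
      ≤ ENNReal.ofReal δ :=
    le_trans hhoef (ENNReal.ofReal_le_ofReal hexpδ)
  -- good event
  set EZv := ∫ p, Z p ∂μs with hEZv
  set G : Set (Fin n → X × Fin K × Y) :=
    {D | (n:ℝ) * EZv - s < ∑ i, Z (D i)} with hG
  have hGc : Gᶜ = {D | ∑ i, Z (D i) ≤ (n:ℝ) * EZv - s} := by
    ext D
    simp [hG, not_lt]
  have hsub : G ⊆ {D | ∀ (ihat : ιPol) (jhat : ιDec),
      (∀ (i : ιPol) (j : ιDec),
        VhatU n K D (P i) (Ψc j) - VhatU0 n D (Ψc j)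
          ≤ VhatU n K D (P ihat) (Ψc jhat) - VhatU0 n D (Ψc jhat)) →
      VhatU n K D (P ihat) (Ψc jhat) - VhatU0 n D (Ψc jhat)
        > polValue d0 R (uniformPolicy X K) + K * ε} := by
    intro D hD ihat jhat hmax
    have hDm : (n:ℝ) * EZv - s < ∑ i, Z (D i) := hD
    have hstar : VhatU n K D (P istar) (Ψc jstar) - VhatU0 n D (Ψc jstar)
        = (n:ℝ)⁻¹ * ∑ i, Z (D i) := by
      rw [VhatU, VhatU0, ← mul_sub, ← Finset.sum_sub_distrib]
    have hscale : (n:ℝ)⁻¹ * ((n:ℝ) * EZv - s) = EZv - (K:ℝ) * ε := by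
      rw [hs]
      field_simp
    have h2 : EZv - (K:ℝ) * ε < (n:ℝ)⁻¹ * ∑ i, Z (D i) := by
      rw [← hscale]
      exact mul_lt_mul_of_pos_left hDm (by positivity)
    have h3 := hmax istar jstar
    have h4 : polValue d0 R (uniformPolicy X K) + η ≤ EZv := hEZge
    rw [hstar] at h3
    linarith
  -- measure arithmetic
  haveI : IsProbabilityMeasure (Measure.pi fun _ : Fin n => μs) := by infer_instance
  have h1 : (1 : ℝ≥0∞) ≤ (Measure.pi fun _ : Fin n => μs) G
      + (Measure.pi fun _ : Fin n => μs) Gᶜ := by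
    have := measure_union_le (μ := Measure.pi fun _ : Fin n => μs) G Gᶜ
    rw [Set.union_compl_self, measure_univ] at this
    exact this
  have h2 : (Measure.pi fun _ : Fin n => μs) Gᶜ ≤ ENNReal.ofReal δ := by
    rw [hGc]
    exact hbad
  have hG1 : ENNReal.ofReal (1 - δ) ≤ (Measure.pi fun _ : Fin n => μs) G := by
    rw [← ENNReal.add_le_add_iff_right ((ENNReal.ofReal_ne_top : ENNReal.ofReal δ ≠ ⊤))]
    calc ENNReal.ofReal (1 - δ) + ENNReal.ofReal δ = ENNReal.ofReal 1 := by
          rw [← ENNReal.ofReal_add (by linarith) hδ.le]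
          norm_num
      _ = 1 := ENNReal.ofReal_one
      _ ≤ (Measure.pi fun _ : Fin n => μs) G + ENNReal.ofReal δ :=
          le_trans h1 (add_le_add le_rfl h2)
  calc ENNReal.ofReal (1 - δ) ≤ (Measure.pi fun _ : Fin n => μs) G := hG1
    _ ≤ _ := measure_mono hsub


end IGL
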